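/- Let Γ be a countable amenable group and α an action of Γ by homeomorphisms on a nonempty compact Hausdorff 0-dimensional space X. Then b ∈ T(α) is an order unit if and only if μ(b) > 0 for every μ ∈ M(α). -/

import Mathlib

open MeasureTheory Set
open scoped ENNReal

/-! Preliminary definitions: the clopen type semigroup of an action of a group `Γ`
by homeomorphisms on a topological space `X`, invariant measures, dynamical comparison,
topological full groups, and the topology on spaces of actions. -/

/-- The group of self-homeomorphisms of `X`, with `(g * h) x = g (h x)`. -/
instance homeoGroup (X : Type*) [TopologicalSpace X] : Group (X ≃ₜ X) where
  mul g h := h.trans g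
  one := Homeomorph.refl X
  inv := Homeomorph.symm
  mul_assoc a b c := Homeomorph.ext fun _ => rfl
  one_mul a := Homeomorph.ext fun _ => rfl
  mul_one a := Homeomorph.ext fun _ => rfl
  inv_mul_cancel a := Homeomorph.ext fun x => a.symm_apply_apply x

/-- The Cantor space `{0,1}^ℕ`. -/
abbrev Cantor : Type := ℕ → Bool

section Defs

variable {Γ : Type*} [Group Γ] {X : Type*} [TopologicalSpace X]

/-- A left-invariant finitely additive probability measure on (the power set of) `Γ`,
with values in `[0,1]`. `Γ` is amenable iff such a measure exists. -/
def IsInvFapm {Γ : Type*} [Group Γ] (m : Set Γ → ℝ) : Prop :=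
  (∀ E : Set Γ, 0 ≤ m E) ∧ (∀ E : Set Γ, m E ≤ 1) ∧ m Set.univ = 1 ∧
  (∀ E F : Set Γ, Disjoint E F → m (E ∪ F) = m E + m F) ∧
  (∀ (γ : Γ) (E : Set Γ), m ((γ * ·) '' E) = m E)

/-- The action of `γ ∈ Γ` on continuous `ℕ`-valued functions: `(γ · f)(x) = f(γ⁻¹ · x)`. -/
def actC (α : Γ →* X ≃ₜ X) (γ : Γ) (f : C(X, ℕ)) : C(X, ℕ) :=
  f.comp (α γ⁻¹)

/-- The equidecomposability relation `∼` on `C(X, ℕ)`: `f ∼ g` iff `f = h₁ + ⋯ + hₙ`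
and `g = γ₁·h₁ + ⋯ + γₙ·hₙ` for some `hᵢ ∈ C(X,ℕ)`, `γᵢ ∈ Γ`. -/
def TypeRel (α : Γ →* X ≃ₜ X) (f g : C(X, ℕ)) : Prop :=
  ∃ (n : ℕ) (h : Fin n → C(X, ℕ)) (γ : Fin n → Γ),
    f = ∑ i, h i ∧ g = ∑ i, actC α (γ i) (h i)

/-- The additive congruence on `C(X, ℕ)` generated by `∼` (since `∼` is itself an
additive congruence, this is just `∼`). -/
def typeCon (α : Γ →* X ≃ₜ X) : AddCon C(X, ℕ) := addConGen (TypeRel α)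

/-- The clopen type semigroup `T(α) = C(X,ℕ)/∼`. -/
abbrev TypeSemigroup (α : Γ →* X ≃ₜ X) := (typeCon α).Quotient

/-- The class `[f] ∈ T(α)` of `f ∈ C(X, ℕ)`. -/
def cls (α : Γ →* X ≃ₜ X) (f : C(X, ℕ)) : TypeSemigroup α := (typeCon α).toQuotient f

/-- The algebraic preorder on `T(α)`: `a ≤ b` iff `a + c = b` for some `c`. -/
def tle (α : Γ →* X ≃ₜ X) (a b : TypeSemigroup α) : Prop := ∃ c, a + c = b

/-- `T(α)` is unperforated: `n • a ≤ n • b` implies `a ≤ b` for all `n ≥ 1`. -/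
def IsUnperforated (α : Γ →* X ≃ₜ X) : Prop :=
  ∀ (a b : TypeSemigroup α) (n : ℕ), 1 ≤ n → tle α (n • a) (n • b) → tle α a b

/-- `T(α)` is almost unperforated: `(n+1) • a ≤ n • b` implies `a ≤ b`. -/
def IsAlmostUnperforated (α : Γ →* X ≃ₜ X) : Prop :=
  ∀ (a b : TypeSemigroup α) (n : ℕ), tle α ((n + 1) • a) (n • b) → tle α a b

/-- `T(α)` is cancellative: `a + b = a + c` implies `b = c`. -/
def IsCancellative (α : Γ →* X ≃ₜ X) : Prop :=
  ∀ a b c : TypeSemigroup α, a + b = a + c → b = c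

/-- The algebraic preorder on `T(α)` is a partial order, i.e. it is antisymmetric. -/
def TleAntisymm (α : Γ →* X ≃ₜ X) : Prop :=
  ∀ a b : TypeSemigroup α, tle α a b → tle α b a → a = b

/-- `b` is an order unit of `T(α)`: every `a` satisfies `a ≤ k • b` for some `k ∈ ℕ`. -/
def IsOrderUnit (α : Γ →* X ≃ₜ X) (b : TypeSemigroup α) : Prop :=
  ∀ a : TypeSemigroup α, ∃ k : ℕ, tle α a (k • b)

/-- A state on `T(α)`: an additive map to `[0,∞]` sending `0` to `0`. -/
def IsState (α : Γ →* X ≃ₜ X) (ν : TypeSemigroup α → ℝ≥0∞) : Prop :=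
  ν 0 = 0 ∧ ∀ a b : TypeSemigroup α, ν (a + b) = ν a + ν b

/-- `M(α)`: the set of `Γ`-invariant Radon (regular Borel) probability measures on `X`. -/
def invRadon (α : Γ →* X ≃ₜ X) : Set (@Measure X (borel X)) :=
  letI : MeasurableSpace X := borel X
  {μ : Measure X | IsProbabilityMeasure μ ∧ μ.Regular ∧ ∀ γ : Γ, Measure.map ⇑(α γ) μ = μ}

/-- The set of `Γ`-invariant Borel probability measures on `X`. -/
def invBorel (α : Γ →* X ≃ₜ X) : Set (@Measure X (borel X)) :=
  letI : MeasurableSpace X := borel X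
  {μ : Measure X | IsProbabilityMeasure μ ∧ ∀ γ : Γ, Measure.map ⇑(α γ) μ = μ}

/-- `μ([f]) = ∫ f dμ`, the value of (the state associated with) a measure on the class of
`f ∈ C(X, ℕ)`. -/
noncomputable def intOf {X : Type*} [TopologicalSpace X] (μ : @Measure X (borel X))
    (f : C(X, ℕ)) : ℝ :=
  letI : MeasurableSpace X := borel X
  ∫ x, (f x : ℝ) ∂μ

/-- `A` is subequidecomposable to `B`: there are a partition `A = A₁ ⊔ ⋯ ⊔ Aₙ` into clopen
sets and `γ₁, …, γₙ ∈ Γ` with `γ₁A₁, …, γₙAₙ` pairwise disjoint and contained in `B`. -/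
def Subequidecomposable (α : Γ →* X ≃ₜ X) (A B : Set X) : Prop :=
  ∃ (n : ℕ) (P : Fin n → Set X) (γ : Fin n → Γ),
    (∀ i, IsClopen (P i)) ∧ (Pairwise fun i j => Disjoint (P i) (P j)) ∧
    (⋃ i, P i) = A ∧
    (Pairwise fun i j => Disjoint (⇑(α (γ i)) '' P i) (⇑(α (γ j)) '' P j)) ∧
    ∀ i, ⇑(α (γ i)) '' P i ⊆ B

/-- Dynamical comparison (with respect to invariant Radon probability measures): for all
clopen `A`, `B` with `B` nonempty and `μ(A) < μ(B)` for every `μ ∈ M(α)`, `A` is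
subequidecomposable to `B`. -/
def DynComparison (α : Γ →* X ≃ₜ X) : Prop :=
  ∀ A B : Set X, IsClopen A → IsClopen B → B.Nonempty →
    (∀ μ ∈ invRadon α, μ A < μ B) → Subequidecomposable α A B

/-- Dynamical comparison (with respect to invariant Borel probability measures). -/
def DynComparisonBorel (α : Γ →* X ≃ₜ X) : Prop :=
  ∀ A B : Set X, IsClopen A → IsClopen B → B.Nonempty →
    (∀ μ ∈ invBorel α, μ A < μ B) → Subequidecomposable α A B

/-- The action `α` is minimal: the only closed invariant subsets are `∅` and `X`. -/
def IsMinimalAction (α : Γ →* X ≃ₜ X) : Prop :=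
  ∀ F : Set X, IsClosed F → (∀ γ : Γ, ⇑(α γ) '' F ⊆ F) → F = ∅ ∨ F = Set.univ

/-- Membership in the topological full group `⟦α⟧`: `g` coincides with elements of the
action on the pieces of a finite clopen partition of `X`. -/
def InTopFullGroup (α : Γ →* X ≃ₜ X) (g : X ≃ₜ X) : Prop :=
  ∃ (n : ℕ) (P : Fin n → Set X) (γ : Fin n → Γ),
    (∀ i, IsClopen (P i)) ∧ (Pairwise fun i j => Disjoint (P i) (P j)) ∧
    (⋃ i, P i) = Set.univ ∧ ∀ i, ∀ x ∈ P i, g x = α (γ i) x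

/-- `⟦α⟧` admits a dense locally finite subgroup: there is a subgroup `Λ` of `Homeo(X)`
contained in `⟦α⟧`, locally finite (all its finitely generated subgroups are finite), and
dense in `⟦α⟧` for the topology whose basic neighborhoods of `h` are
`{g : g A = h A for all A ∈ 𝒜}`, `𝒜` ranging over finite clopen partitions of `X`. -/
def HasDenseLocallyFiniteSubgroup (α : Γ →* X ≃ₜ X) : Prop :=
  ∃ Λ : Subgroup (X ≃ₜ X),
    ((Λ : Set (X ≃ₜ X)) ⊆ {g | InTopFullGroup α g}) ∧
    (∀ s : Finset (X ≃ₜ X), (s : Set (X ≃ₜ X)) ⊆ (Λ : Set (X ≃ₜ X)) →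
      ((Subgroup.closure (s : Set (X ≃ₜ X)) : Subgroup (X ≃ₜ X)) : Set (X ≃ₜ X)).Finite) ∧
    ∀ g : X ≃ₜ X, InTopFullGroup α g →
      ∀ (n : ℕ) (P : Fin n → Set X), (∀ i, IsClopen (P i)) →
        (Pairwise fun i j => Disjoint (P i) (P j)) → (⋃ i, P i) = Set.univ →
        ∃ l ∈ Λ, ∀ i, ⇑l '' P i = ⇑g '' P i

end Defs

/-- The topology on `Homeo(X)` whose basic neighborhoods of `h` are the sets
`{g : g A = h A for all A ∈ 𝒜}`, for `𝒜` a finite clopen partition of `X`; equivalently,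
the topology generated by the sets `{g : g '' A = B}` for `A`, `B` clopen. -/
def homeoTop (X : Type*) [TopologicalSpace X] : TopologicalSpace (X ≃ₜ X) :=
  TopologicalSpace.generateFrom
    {U | ∃ A B : Set X, IsClopen A ∧ IsClopen B ∧ U = {g : X ≃ₜ X | ⇑g '' A = B}}

/-- The topology on the space `A(Γ)` of actions of `Γ` on `X`, induced from the product
topology on `Homeo(X)^Γ`. -/
def actionTop (Γ : Type*) [Group Γ] (X : Type*) [TopologicalSpace X] :
    TopologicalSpace (Γ →* (X ≃ₜ X)) :=
  letI := homeoTop X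
  TopologicalSpace.induced (fun φ : Γ →* (X ≃ₜ X) => ⇑φ) Pi.topologicalSpace

section Aux

variable {Γ : Type*} [Group Γ] {X : Type*} [TopologicalSpace X]

namespace Stmt11Aux

open scoped NNReal

/-- A continuous map `X → ℕ` from a locally constant function. -/
noncomputable def mkC (f : X → ℕ) (hf : IsLocallyConstant f) : C(X, ℕ) :=
  ⟨f, hf.continuous⟩

theorem locConst (f : C(X, ℕ)) : IsLocallyConstant ⇑f :=
  (IsLocallyConstant.iff_continuous _).2 f.continuous

theorem cls_add (α : Γ →* X ≃ₜ X) (f g : C(X, ℕ)) :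
    cls α (f + g) = cls α f + cls α g := rfl

theorem cls_nsmul (α : Γ →* X ≃ₜ X) (k : ℕ) (f : C(X, ℕ)) :
    cls α (k • f) = k • cls α f := by
  induction k with
  | zero => rw [zero_nsmul, zero_nsmul]; rfl
  | succ n ih => rw [succ_nsmul, succ_nsmul, ← ih, ← cls_add]

theorem cls_eq_of_rel (α : Γ →* X ≃ₜ X) {f g : C(X, ℕ)} (h : TypeRel α f g) :
    cls α f = cls α g :=
  (AddCon.eq _).2 (AddConGen.Rel.of _ _ h)

theorem tle_trans (α : Γ →* X ≃ₜ X) {a b c : TypeSemigroup α} (h1 : tle α a b)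
    (h2 : tle α b c) : tle α a c := by
  obtain ⟨u, rfl⟩ := h1; obtain ⟨v, rfl⟩ := h2
  exact ⟨u + v, (add_assoc _ _ _).symm⟩

theorem tle_nsmul (α : Γ →* X ≃ₜ X) {a b : TypeSemigroup α} (k : ℕ) (h : tle α a b) :
    tle α (k • a) (k • b) := by
  obtain ⟨u, rfl⟩ := h
  exact ⟨k • u, (smul_add k a u).symm⟩

open scoped Classical in
/-- The indicator of a clopen set as a continuous `ℕ`-valued map. -/
noncomputable def indC (A : Set X) (hA : IsClopen A) : C(X, ℕ) :=
  ⟨fun x => if x ∈ A then 1 else 0, by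
    exact Continuous.if (by simp [hA.frontier_eq]) continuous_const continuous_const⟩

open scoped Classical in
theorem indC_apply (A : Set X) (hA : IsClopen A) (x : X) :
    indC A hA x = if x ∈ A then 1 else 0 := rfl

theorem exists_bound [CompactSpace X] (g : C(X, ℕ)) : ∃ N : ℕ, ∀ x, g x ≤ N := by
  obtain ⟨N, hN⟩ := (isCompact_range g.continuous).finite_of_discrete.bddAbove
  exact ⟨N, fun x => hN ⟨x, rfl⟩⟩

theorem tle_of_le (α : Γ →* X ≃ₜ X) {f g : C(X, ℕ)} (h : ∀ x, f x ≤ g x) :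
    tle α (cls α f) (cls α g) := by
  refine ⟨cls α (mkC (fun x => g x - f x)
    (((locConst g).prodMk (locConst f)).comp (fun p : ℕ × ℕ => p.1 - p.2))), ?_⟩
  rw [← cls_add]
  congr 1
  ext x
  have := h x
  simp only [ContinuousMap.add_apply, mkC, ContinuousMap.coe_mk]
  omega

theorem const_eq (N : ℕ) :
    (N • ContinuousMap.const X (1 : ℕ)) = ContinuousMap.const X N := by
  ext x; simp

theorem isOrderUnit_of_one [CompactSpace X] (α : Γ →* X ≃ₜ X) {b : TypeSemigroup α}
    (h : ∃ k : ℕ, tle α (cls α (ContinuousMap.const X 1)) (k • b)) : IsOrderUnit α b := by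
  obtain ⟨k, hk⟩ := h
  intro a
  refine AddCon.induction_on a fun g => ?_
  obtain ⟨N, hN⟩ := exists_bound g
  refine ⟨k * N, ?_⟩
  have h1 : tle α (cls α g) (cls α (N • ContinuousMap.const X (1 : ℕ))) := by
    apply tle_of_le
    intro x
    rw [const_eq]
    exact hN x
  rw [cls_nsmul] at h1
  have h2 := tle_nsmul α N hk
  rw [← mul_nsmul] at h2
  exact tle_trans α h1 h2

section Integral

variable [CompactSpace X] [T2Space X]

theorem integrableC (μ : @Measure X (borel X)) (hfin : @IsFiniteMeasure X (borel X) μ)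
    (g : C(X, ℕ)) :
    Integrable (fun x => (g x : ℝ)) μ := by
  letI : MeasurableSpace X := borel X
  haveI : BorelSpace X := ⟨rfl⟩
  haveI := hfin
  have hc : Continuous fun x => (g x : ℝ) :=
    continuous_of_discreteTopology.comp g.continuous
  exact hc.integrable_of_hasCompactSupport (HasCompactSupport.of_compactSpace _)

theorem intOf_zero (μ : @Measure X (borel X)) : intOf μ (0 : C(X, ℕ)) = 0 := by
  letI : MeasurableSpace X := borel X
  simp [intOf]

theorem intOf_add (μ : @Measure X (borel X)) (hfin : @IsFiniteMeasure X (borel X) μ)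
    (f g : C(X, ℕ)) : intOf μ (f + g) = intOf μ f + intOf μ g := by
  letI : MeasurableSpace X := borel X
  haveI : BorelSpace X := ⟨rfl⟩
  have h1 := integrableC μ hfin f
  have h2 := integrableC μ hfin g
  have : intOf μ (f + g) = ∫ x, ((f x : ℝ) + (g x : ℝ)) ∂μ := by
    unfold intOf
    congr 1
    ext x
    push_cast [ContinuousMap.add_apply]
    ring
  rw [this, integral_add h1 h2]
  rfl

theorem intOf_nonneg (μ : @Measure X (borel X)) (g : C(X, ℕ)) : 0 ≤ intOf μ g := by
  letI : MeasurableSpace X := borel X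
  exact integral_nonneg fun x => by positivity

theorem intOf_nsmul (μ : @Measure X (borel X)) (hfin : @IsFiniteMeasure X (borel X) μ)
    (k : ℕ) (f : C(X, ℕ)) : intOf μ (k • f) = k * intOf μ f := by
  induction k with
  | zero => simpa using intOf_zero μ
  | succ n ih =>
    rw [succ_nsmul, intOf_add μ hfin, ih]
    push_cast
    ring

theorem intOf_one (μ : @Measure X (borel X)) (hp : @IsProbabilityMeasure X (borel X) μ) :
    intOf μ (ContinuousMap.const X 1) = 1 := by
  letI : MeasurableSpace X := borel X
  haveI := hp
  unfold intOf
  simp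

theorem intOf_actC (α : Γ →* X ≃ₜ X) (μ : @Measure X (borel X))
    (hinv : ∀ γ : Γ, @Measure.map X X (borel X) (borel X) (⇑(α γ)) μ = μ)
    (γ : Γ) (h : C(X, ℕ)) : intOf μ (actC α γ h) = intOf μ h := by
  letI : MeasurableSpace X := borel X
  haveI : BorelSpace X := ⟨rfl⟩
  have hm : Measurable ⇑(α γ⁻¹) := (α γ⁻¹).continuous.measurable
  have hc : Continuous fun y => ((h y : ℕ) : ℝ) :=
    continuous_of_discreteTopology.comp h.continuous
  have key : ∫ y, ((h y : ℕ) : ℝ) ∂(Measure.map (⇑(α γ⁻¹)) μ)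
      = ∫ x, ((h ((α γ⁻¹) x) : ℕ) : ℝ) ∂μ :=
    integral_map hm.aemeasurable hc.aestronglyMeasurable
  rw [hinv γ⁻¹] at key
  exact key.symm

theorem intOf_sum (μ : @Measure X (borel X)) (hfin : @IsFiniteMeasure X (borel X) μ)
    {n : ℕ} (h : Fin n → C(X, ℕ)) :
    intOf μ (∑ i, h i) = ∑ i, intOf μ (h i) := by
  classical
  induction n with
  | zero => simpa using intOf_zero μ
  | succ n ih =>
    rw [Fin.sum_univ_succ, Fin.sum_univ_succ, intOf_add μ hfin, ih (fun i => h i.succ)]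

theorem intOf_rel (α : Γ →* X ≃ₜ X) (μ : @Measure X (borel X))
    (hfin : @IsFiniteMeasure X (borel X) μ)
    (hinv : ∀ γ : Γ, @Measure.map X X (borel X) (borel X) (⇑(α γ)) μ = μ)
    {f g : C(X, ℕ)} (h : TypeRel α f g) : intOf μ f = intOf μ g := by
  obtain ⟨n, hfn, γ, rfl, rfl⟩ := h
  rw [intOf_sum μ hfin, intOf_sum μ hfin]
  exact Finset.sum_congr rfl fun i _ => (intOf_actC α μ hinv (γ i) (hfn i)).symm

/-- The additive congruence "equal integrals against `μ`". -/
def intCon (α : Γ →* X ≃ₜ X) (μ : @Measure X (borel X))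
    (hfin : @IsFiniteMeasure X (borel X) μ) : AddCon C(X, ℕ) where
  r a b := intOf μ a = intOf μ b
  iseqv := ⟨fun _ => rfl, Eq.symm, Eq.trans⟩
  add' := by
    intro a b c d h1 h2
    show intOf μ (a + c) = intOf μ (b + d)
    have h1' : intOf μ a = intOf μ b := h1
    have h2' : intOf μ c = intOf μ d := h2
    rw [intOf_add μ hfin, intOf_add μ hfin, h1', h2']

theorem intOf_eq_of_typeCon (α : Γ →* X ≃ₜ X) (μ : @Measure X (borel X))
    (hfin : @IsFiniteMeasure X (borel X) μ)
    (hinv : ∀ γ : Γ, @Measure.map X X (borel X) (borel X) (⇑(α γ)) μ = μ)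
    {f g : C(X, ℕ)} (h : typeCon α f g) : intOf μ f = intOf μ g := by
  have hle : typeCon α ≤ intCon α μ hfin :=
    AddCon.addConGen_le.2 fun a b hab => intOf_rel α μ hfin hinv hab
  exact hle h

end Integral

theorem isClopen_image (α : Γ →* X ≃ₜ X) (γ : Γ) {A : Set X} (hA : IsClopen A) :
    IsClopen (⇑(α γ) '' A) := by
  rw [← Homeomorph.preimage_symm]
  exact hA.preimage (α γ).symm.continuous

theorem nsmul_apply (k : ℕ) (f : C(X, ℕ)) (x : X) : (k • f) x = k * f x := by
  induction k with
  | zero => rw [zero_nsmul]; simp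
  | succ n ih => rw [succ_nsmul]; simp [ih]; ring

theorem one_tle_of_cover [CompactSpace X] (α : Γ →* X ≃ₜ X) (f : C(X, ℕ)) (t : Finset Γ)
    (hcov : ∀ x : X, ∃ γ ∈ t, x ∈ ⇑(α γ) '' {y | f y ≠ 0}) :
    ∃ k : ℕ, tle α (cls α (ContinuousMap.const X 1)) (k • cls α f) := by
  classical
  set U : Set X := {y | f y ≠ 0} with hU
  have hUclopen : IsClopen U := by
    have : U = ⇑f ⁻¹' ({0}ᶜ : Set ℕ) := by ext y; simp [hU]
    rw [this]
    exact (isClopen_discrete _).preimage f.continuous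
  set k := t.card with hk
  set γi : Fin k → Γ := fun i => (t.equivFin.symm i : Γ) with hγi
  set V : Fin k → Set X := fun i => ⇑(α (γi i)) '' U with hV
  have hVclopen : ∀ i, IsClopen (V i) := fun i => isClopen_image α _ hUclopen
  have hcov' : ∀ x : X, ∃ i, x ∈ V i := by
    intro x
    obtain ⟨γ, hγt, hγ⟩ := hcov x
    refine ⟨t.equivFin ⟨γ, hγt⟩, ?_⟩
    simpa [hV, hγi, Equiv.symm_apply_apply] using hγ
  set P : Fin k → Set X := fun i => V i \ ⋃ j, ⋃ (_ : j < i), V j with hP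
  have hPclopen : ∀ i, IsClopen (P i) := by
    intro i
    refine (hVclopen i).diff (isClopen_iUnion_of_finite fun j => ?_)
    rw [Set.iUnion_eq_if]
    split_ifs
    · exact hVclopen j
    · exact isClopen_empty
  have key : ∀ x : X, ∃ i₀, x ∈ P i₀ ∧ ∀ j, j ≠ i₀ → x ∉ P j := by
    intro x
    set s : Finset (Fin k) := Finset.univ.filter (fun i => x ∈ V i) with hs
    have hsne : s.Nonempty := by
      obtain ⟨i, hi⟩ := hcov' x
      exact ⟨i, by simp [hs, hi]⟩
    set i₀ := s.min' hsne with hi₀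
    have hi₀V : x ∈ V i₀ := by
      have := s.min'_mem hsne
      simp only [hs, Finset.mem_filter] at this
      exact this.2
    have hmin : ∀ j, x ∈ V j → i₀ ≤ j := fun j hj => s.min'_le j (by simp [hs, hj])
    refine ⟨i₀, ⟨hi₀V, ?_⟩, ?_⟩
    · simp only [Set.mem_iUnion, not_exists]
      intro j hj hVj
      exact absurd (hmin j hVj) (not_le.mpr hj)
    · rintro j hj ⟨hVj, hnot⟩
      rcases lt_or_gt_of_ne hj with hlt | hgt
      · exact absurd (hmin j hVj) (not_le.mpr hlt)
      · apply hnot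
        exact Set.mem_iUnion.mpr ⟨i₀, Set.mem_iUnion.mpr ⟨hgt, hi₀V⟩⟩
  set hfun : Fin k → C(X, ℕ) := fun i => indC (P i) (hPclopen i) with hhfun
  have hsum : ContinuousMap.const X 1 = ∑ i, hfun i := by
    ext x
    obtain ⟨i₀, hi₀, huniq⟩ := key x
    have : ∀ i, hfun i x = if i = i₀ then 1 else 0 := by
      intro i
      by_cases hi : i = i₀
      · subst hi; simp [hhfun, indC_apply, hi₀]
      · simp [hhfun, indC_apply, huniq i hi, hi]
    simp only [ContinuousMap.coe_sum, Finset.sum_apply, this, ContinuousMap.const_apply]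
    simp
  set g : C(X, ℕ) := ∑ i, actC α (γi i)⁻¹ (hfun i) with hg
  have hrel : TypeRel α (ContinuousMap.const X 1) g :=
    ⟨k, hfun, fun i => (γi i)⁻¹, hsum, rfl⟩
  have h1 : cls α (ContinuousMap.const X 1) = cls α g := cls_eq_of_rel α hrel
  have h2 : tle α (cls α g) (cls α (k • f)) := by
    apply tle_of_le
    intro x
    have hterm : ∀ i, (actC α (γi i)⁻¹ (hfun i)) x
        = indC (P i) (hPclopen i) ((α (γi i)) x) := by
      intro i
      simp only [actC, ContinuousMap.comp_apply, hhfun, inv_inv]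
      rfl
    have hbound : ∀ i, (actC α (γi i)⁻¹ (hfun i)) x ≤ if x ∈ U then 1 else 0 := by
      intro i
      rw [hterm i, indC_apply]
      split_ifs with h1' h2'
      · exact le_refl 1
      · exfalso
        apply h2'
        have : (α (γi i)) x ∈ V i := (Set.diff_subset) h1'
        rw [hV] at this
        exact ((α (γi i)).injective.mem_set_image).1 this
      · exact Nat.zero_le _
      · exact le_refl 0
    rw [nsmul_apply, hg, ContinuousMap.coe_sum, Finset.sum_apply]
    calc ∑ i, (actC α (γi i)⁻¹ (hfun i)) x
        ≤ ∑ _i : Fin k, (if x ∈ U then 1 else 0) := Finset.sum_le_sum fun i _ => hbound i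
      _ = k * (if x ∈ U then 1 else 0) := by simp [Finset.sum_const, mul_comm]
      _ ≤ k * f x := by
          apply Nat.mul_le_mul_left
          split_ifs with hx
          · exact Nat.one_le_iff_ne_zero.mpr hx
          · exact Nat.zero_le _
  rw [cls_nsmul] at h2
  exact ⟨k, h1 ▸ h2⟩

section MeasureConstruction

variable [CompactSpace X] [T2Space X] [TotallyDisconnectedSpace X]

theorem exists_clopen_between {K V : Set X} (hK : IsCompact K) (hV : IsOpen V)
    (hKV : K ⊆ V) : ∃ A : Set X, IsClopen A ∧ K ⊆ A ∧ A ⊆ V := by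
  classical
  have hx : ∀ x : X, x ∈ K → ∃ A : Set X, IsClopen A ∧ x ∈ A ∧ A ⊆ V := by
    intro x hxK
    rcases isTopologicalBasis_isClopen.exists_subset_of_mem_open (hKV hxK) hV with
      ⟨A, hA, hxA, hAV⟩
    exact ⟨A, hA, hxA, hAV⟩
  choose! A hAc hxA hAV using hx
  obtain ⟨s, hs⟩ := hK.elim_finite_subcover (fun x : K => A x)
    (fun x => (hAc x x.2).isOpen) (fun x hxK => Set.mem_iUnion.2 ⟨⟨x, hxK⟩, hxA x hxK⟩)
  refine ⟨⋃ x ∈ s, A x, ?_, ?_, ?_⟩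
  · exact isClopen_biUnion_finset fun i _ => hAc _ (i : K).2
  · intro x hxK
    rcases Set.mem_iUnion.1 (hs hxK) with ⟨i, hi⟩
    rcases Set.mem_iUnion.1 hi with ⟨his, hx⟩
    exact Set.mem_biUnion his hx
  · exact Set.iUnion₂_subset fun i _ => hAV _ (i : K).2

theorem clopen_sep {K L : Set X} (hK : IsCompact K) (hL : IsCompact L)
    (hKL : Disjoint K L) : ∃ S : Set X, IsClopen S ∧ K ⊆ S ∧ Disjoint L S := by
  obtain ⟨S, hS, hKS, hSV⟩ := exists_clopen_between hK hL.isClosed.isOpen_compl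
    (Set.subset_compl_iff_disjoint_right.2 hKL)
  exact ⟨S, hS, hKS, Set.disjoint_left.2 fun x hxL hxS => hSV hxS hxL⟩

theorem clopen_ext (μ₁ μ₂ : @Measure X (borel X))
    (h₁ : @Measure.Regular X (borel X) _ μ₁) (h₂ : @Measure.Regular X (borel X) _ μ₂)
    (h : ∀ A : Set X, IsClopen A → μ₁ A = μ₂ A) : μ₁ = μ₂ := by
  letI : MeasurableSpace X := borel X
  haveI : BorelSpace X := ⟨rfl⟩
  haveI := h₁
  haveI := h₂
  have hK : ∀ K : Set X, IsCompact K → μ₁ K = μ₂ K := by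
    have aux : ∀ ν₁ ν₂ : Measure X, ν₁.Regular → ν₂.Regular →
        (∀ A : Set X, IsClopen A → ν₁ A = ν₂ A) →
        ∀ K : Set X, IsCompact K → ν₁ K ≤ ν₂ K := by
      intro ν₁ ν₂ hr₁ hr₂ hcl K hKc
      rw [Set.measure_eq_iInf_isOpen K ν₂]
      refine le_iInf fun V => le_iInf fun hKV => le_iInf fun hVo => ?_
      obtain ⟨A, hA, hKA, hAV⟩ := exists_clopen_between hKc hVo hKV
      calc ν₁ K ≤ ν₁ A := measure_mono hKA
        _ = ν₂ A := hcl A hA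
        _ ≤ ν₂ V := measure_mono hAV
    intro K hKc
    exact le_antisymm (aux μ₁ μ₂ h₁ h₂ h K hKc)
      (aux μ₂ μ₁ h₂ h₁ (fun A hA => (h A hA).symm) K hKc)
  have hO : ∀ V : Set X, IsOpen V → μ₁ V = μ₂ V := by
    intro V hV
    rw [hV.measure_eq_iSup_isCompact μ₁, hV.measure_eq_iSup_isCompact μ₂]
    exact iSup_congr fun K => iSup_congr fun _ => iSup_congr fun hKc => hK K hKc
  refine Measure.ext fun s _hs => ?_
  rw [Set.measure_eq_iInf_isOpen s μ₁, Set.measure_eq_iInf_isOpen s μ₂]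
  exact iInf_congr fun V => iInf_congr fun _ => iInf_congr fun hVo => hO V hVo

theorem exists_invRadon_null (α : Γ →* X ≃ₜ X) (m : Set Γ → ℝ) (hm : IsInvFapm m)
    {U : Set X} (hU : IsClopen U) (x₀ : X) (horb : ∀ γ : Γ, (α γ) x₀ ∉ U) :
    ∃ μ ∈ invRadon α, μ U = 0 := by
  classical
  obtain ⟨hnn, _hle1, huniv, hadd, hinv⟩ := hm
  have hm0 : m ∅ = 0 := by
    have := hadd ∅ ∅ (disjoint_bot_left)
    simp at this
    linarith
  set E : Set X → Set Γ := fun A => {γ | (α γ) x₀ ∈ A} with hE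
  set ν : Set X → ℝ≥0 := fun A => Real.toNNReal (m (E A)) with hν
  have hEmono : ∀ A B : Set X, A ⊆ B → E A ⊆ E B := fun A B hAB γ hγ => hAB hγ
  have hmmono : ∀ F G : Set Γ, F ⊆ G → m F ≤ m G := by
    intro F G hFG
    have hdis : Disjoint F (G \ F) := disjoint_sdiff_self_right
    have := hadd F (G \ F) hdis
    rw [Set.union_diff_cancel hFG] at this
    have := hnn (G \ F)
    linarith [hadd F (G \ F) hdis]
  have hνmono : ∀ A B : Set X, A ⊆ B → ν A ≤ ν B := fun A B hAB =>
    Real.toNNReal_mono (hmmono _ _ (hEmono A B hAB))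
  have hEadd : ∀ A B : Set X, E (A ∪ B) = E A ∪ E B := by
    intro A B; ext γ; simp [hE]
  have hEdis : ∀ A B : Set X, Disjoint A B → Disjoint (E A) (E B) := by
    intro A B hAB
    rw [Set.disjoint_left] at hAB ⊢
    exact fun γ hγA hγB => hAB hγA hγB
  have hνadd : ∀ A B : Set X, Disjoint A B → ν (A ∪ B) = ν A + ν B := by
    intro A B hAB
    rw [hν]
    simp only
    rw [hEadd, hadd _ _ (hEdis A B hAB), Real.toNNReal_add (hnn _) (hnn _)]
  have hνuniv : ν Set.univ = 1 := by
    have : E Set.univ = Set.univ := by ext γ; simp [hE]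
    simp [hν, this, huniv]
  have hνU : ν U = 0 := by
    have : E U = ∅ := by
      ext γ; simp only [hE, Set.mem_setOf_eq, Set.mem_empty_iff_false, iff_false]
      exact horb γ
    simp [hν, this, hm0]
  have hνinv : ∀ (γ : Γ) (A : Set X), ν (⇑(α γ) '' A) = ν A := by
    intro γ A
    have hEim : E (⇑(α γ) '' A) = (γ * ·) '' E A := by
      ext δ
      simp only [hE, Set.mem_setOf_eq, Set.mem_image]
      constructor
      · rintro ⟨y, hyA, hy⟩
        refine ⟨γ⁻¹ * δ, ?_, by group⟩
        show (α (γ⁻¹ * δ)) x₀ ∈ A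
        have : (α (γ⁻¹ * δ)) x₀ = (α γ⁻¹) ((α δ) x₀) := by
          rw [map_mul]; rfl
        rw [this, ← hy]
        have : (α γ⁻¹) ((α γ) y) = y := by
          rw [map_inv]
          exact (α γ).symm_apply_apply y
        rw [this]
        exact hyA
      · rintro ⟨η, hη, rfl⟩
        refine ⟨(α η) x₀, hη, ?_⟩
        rw [map_mul]; rfl
    rw [hν]
    simp only
    rw [hEim, hinv γ (E A)]
  -- the content
  set Cset : Set X → ℝ≥0 := fun K => sInf (ν '' {A : Set X | IsClopen A ∧ K ⊆ A}) with hCset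
  have hCne : ∀ K : Set X, (ν '' {A : Set X | IsClopen A ∧ K ⊆ A}).Nonempty :=
    fun K => ⟨ν Set.univ, ⟨Set.univ, ⟨isClopen_univ, Set.subset_univ K⟩, rfl⟩⟩
  have hC_le : ∀ (K A : Set X), IsClopen A → K ⊆ A → Cset K ≤ ν A := by
    intro K A hA hKA
    exact csInf_le (OrderBot.bddBelow _) ⟨A, ⟨hA, hKA⟩, rfl⟩
  have hC_ge : ∀ (K : Set X) (c : ℝ≥0), (∀ A : Set X, IsClopen A → K ⊆ A → c ≤ ν A) →
      c ≤ Cset K := by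
    intro K c hc
    exact le_csInf (hCne K) (by rintro x ⟨A, ⟨hA, hKA⟩, rfl⟩; exact hc A hA hKA)
  have hC_clopen : ∀ A : Set X, IsClopen A → Cset A = ν A := by
    intro A hA
    exact le_antisymm (hC_le A A hA subset_rfl)
      (hC_ge A (ν A) fun B hB hAB => hνmono A B hAB)
  set Cont : MeasureTheory.Content X :=
    { toFun := fun K => Cset K
      mono' := by
        intro K₁ K₂ hsub
        exact hC_ge _ _ fun A hA hKA => hC_le _ A hA (hsub.trans hKA)
      sup_disjoint' := by
        intro K₁ K₂ hdis _ _
        obtain ⟨S, hS, hK₁S, hK₂S⟩ := clopen_sep K₁.2 K₂.2 hdis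
        apply le_antisymm
        · -- subadditivity
          refine le_of_forall_pos_le_add fun ε hε => ?_
          obtain ⟨a₁, ⟨A₁, ⟨hA₁, hKA₁⟩, rfl⟩, ha₁⟩ :=
            exists_lt_of_csInf_lt (hCne K₁) (lt_add_of_pos_right (Cset K₁) (half_pos hε))
          obtain ⟨a₂, ⟨A₂, ⟨hA₂, hKA₂⟩, rfl⟩, ha₂⟩ :=
            exists_lt_of_csInf_lt (hCne K₂) (lt_add_of_pos_right (Cset K₂) (half_pos hε))
          have hsub : ν (A₁ ∪ A₂) ≤ ν A₁ + ν A₂ := by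
            have h1 : A₁ ∪ A₂ = A₁ ∪ (A₂ \ A₁) := by rw [Set.union_diff_self]
            rw [h1, hνadd _ _ disjoint_sdiff_self_right]
            exact add_le_add le_rfl (hνmono _ _ Set.diff_subset)
          have : Cset ↑(K₁ ⊔ K₂) ≤ ν (A₁ ∪ A₂) :=
            hC_le _ _ (hA₁.union hA₂) (Set.union_subset_iff.2
              ⟨hKA₁.trans Set.subset_union_left, hKA₂.trans Set.subset_union_right⟩)
          calc Cset ↑(K₁ ⊔ K₂) ≤ ν A₁ + ν A₂ := this.trans hsub
            _ ≤ (Cset K₁ + ε / 2) + (Cset K₂ + ε / 2) := add_le_add ha₁.le ha₂.le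
            _ = Cset ↑K₁ + Cset ↑K₂ + ε := by rw [add_add_add_comm, add_halves]
        · refine hC_ge _ _ fun A hA hKA => ?_
          have h1 : Cset ↑K₁ ≤ ν (A ∩ S) :=
            hC_le _ _ (hA.inter hS) (Set.subset_inter
              ((Set.subset_union_left).trans hKA) hK₁S)
          have h2 : Cset ↑K₂ ≤ ν (A \ S) := by
            refine hC_le _ _ (hA.diff hS) ?_
            intro x hx
            exact ⟨(Set.subset_union_right).trans hKA hx,
              Set.disjoint_left.1 hK₂S hx⟩
          have h3 : ν (A ∩ S) + ν (A \ S) = ν A := by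
            rw [← hνadd _ _ (Set.disjoint_of_subset (Set.inter_subset_right)
              Set.Subset.rfl (disjoint_sdiff_self_right ))]
            congr 1
            rw [Set.inter_union_diff]
          calc Cset ↑K₁ + Cset ↑K₂ ≤ ν (A ∩ S) + ν (A \ S) := add_le_add h1 h2
            _ = ν A := h3
      sup_le' := by
        intro K₁ K₂
        refine le_of_forall_pos_le_add fun ε hε => ?_
        obtain ⟨a₁, ⟨A₁, ⟨hA₁, hKA₁⟩, rfl⟩, ha₁⟩ :=
          exists_lt_of_csInf_lt (hCne K₁) (lt_add_of_pos_right (Cset K₁) (half_pos hε))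
        obtain ⟨a₂, ⟨A₂, ⟨hA₂, hKA₂⟩, rfl⟩, ha₂⟩ :=
          exists_lt_of_csInf_lt (hCne K₂) (lt_add_of_pos_right (Cset K₂) (half_pos hε))
        have hsub : ν (A₁ ∪ A₂) ≤ ν A₁ + ν A₂ := by
          have h1 : A₁ ∪ A₂ = A₁ ∪ (A₂ \ A₁) := by rw [Set.union_diff_self]
          rw [h1, hνadd _ _ disjoint_sdiff_self_right]
          exact add_le_add le_rfl (hνmono _ _ Set.diff_subset)
        have : Cset ↑(K₁ ⊔ K₂) ≤ ν (A₁ ∪ A₂) :=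
          hC_le _ _ (hA₁.union hA₂) (Set.union_subset_iff.2
            ⟨hKA₁.trans Set.subset_union_left, hKA₂.trans Set.subset_union_right⟩)
        calc Cset ↑(K₁ ⊔ K₂) ≤ ν A₁ + ν A₂ := this.trans hsub
          _ ≤ (Cset K₁ + ε / 2) + (Cset K₂ + ε / 2) := add_le_add ha₁.le ha₂.le
          _ = Cset ↑K₁ + Cset ↑K₂ + ε := by rw [add_add_add_comm, add_halves] } with hCont
  letI : MeasurableSpace X := borel X
  haveI : BorelSpace X := ⟨rfl⟩
  set μ : Measure X := Cont.measure with hμdef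
  haveI hμreg : μ.Regular := Cont.regular
  have hμA : ∀ A : Set X, IsClopen A → μ A = (ν A : ℝ≥0∞) := by
    intro A hA
    rw [hμdef, Cont.measure_apply hA.isOpen.measurableSet,
      Cont.outerMeasure_of_isOpen A hA.isOpen]
    apply le_antisymm
    · refine iSup_le fun K => iSup_le fun hKA => ?_
      have : Cset ↑K ≤ ν A := hC_le _ A hA hKA
      exact ENNReal.coe_le_coe.2 this
    · have h1 : (ν A : ℝ≥0∞) = (Cset A : ℝ≥0∞) := by rw [hC_clopen A hA]
      rw [h1]
      exact le_iSup₂ (f := fun (K : TopologicalSpace.Compacts X)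
        (_ : (K : Set X) ⊆ (⟨A, hA.isOpen⟩ : TopologicalSpace.Opens X)) =>
          (Cont K : ℝ≥0∞)) ⟨A, hA.isClosed.isCompact⟩ subset_rfl
  haveI hμprob : IsProbabilityMeasure μ := by
    constructor
    rw [hμA Set.univ isClopen_univ, hνuniv]
    rfl
  have hμinv : ∀ γ : Γ, Measure.map (⇑(α γ)) μ = μ := by
    intro γ
    have hmeas : Measurable ⇑(α γ) := (α γ).continuous.measurable
    haveI : (Measure.map (⇑(α γ)) μ).Regular := Measure.Regular.map (α γ)
    apply clopen_ext _ _ (by assumption) hμreg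
    intro A hA
    rw [Measure.map_apply hmeas hA.isOpen.measurableSet]
    have him : ⇑(α γ) ⁻¹' A = ⇑(α γ⁻¹) '' A := by
      rw [← Homeomorph.image_symm]
      congr 1
      rw [map_inv]
      rfl
    rw [him, hμA _ (isClopen_image α γ⁻¹ hA), hμA A hA, hνinv γ⁻¹ A]
  refine ⟨μ, ⟨hμprob, hμreg, hμinv⟩, ?_⟩
  rw [hμA U hU, hνU]
  rfl

end MeasureConstruction

end Stmt11Aux

end Aux

open Stmt11Aux in
/-- Let `Γ` be a countable amenable group and `α` an action of `Γ` by
homeomorphisms on a nonempty compact Hausdorff `0`-dimensional space `X`. Then `b = [f]`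
is an order unit in `T(α)` iff `μ(b) > 0` for every `μ ∈ M(α)`. -/
theorem stmt11 {Γ : Type*} [Group Γ] [Countable Γ]
    {X : Type*} [TopologicalSpace X] [CompactSpace X] [T2Space X]
    [TotallyDisconnectedSpace X] [Nonempty X]
    (hamen : ∃ m : Set Γ → ℝ, IsInvFapm m)
    (α : Γ →* (X ≃ₜ X)) (f : C(X, ℕ)) :
    IsOrderUnit α (cls α f) ↔ ∀ μ ∈ invRadon α, 0 < intOf μ f := by
  classical
  constructor
  · intro h μ hμ
    obtain ⟨hp, _hreg, hinv⟩ := hμ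
    have hfin : @IsFiniteMeasure X (borel X) μ := by
      letI : MeasurableSpace X := borel X
      haveI := hp
      infer_instance
    obtain ⟨k, d, hd⟩ := h (cls α (ContinuousMap.const X 1))
    obtain ⟨g, rfl⟩ := AddCon.mk'_surjective (c := typeCon α) d
    have hd2 : cls α (ContinuousMap.const X 1 + g) = cls α (k • f) := by
      rw [cls_add, cls_nsmul]
      exact hd
    have hrel : typeCon α (ContinuousMap.const X 1 + g) (k • f) := (AddCon.eq _).1 hd2
    have heq := intOf_eq_of_typeCon α μ hfin hinv hrel
    rw [intOf_add μ hfin, intOf_one μ hp, intOf_nsmul μ hfin] at heq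
    have h0 : 0 ≤ intOf μ g := intOf_nonneg μ g
    have hf0 : 0 ≤ intOf μ f := intOf_nonneg μ f
    by_contra hle
    push_neg at hle
    have hf00 : intOf μ f = 0 := le_antisymm hle hf0
    rw [hf00, mul_zero] at heq
    linarith
  · intro hpos
    set U : Set X := {y | f y ≠ 0} with hUdef
    have hUclopen : IsClopen U := by
      have : U = ⇑f ⁻¹' ({0}ᶜ : Set ℕ) := by ext y; simp [hUdef]
      rw [this]
      exact (isClopen_discrete _).preimage f.continuous
    by_cases hcov : ∃ t : Finset Γ, ∀ x : X, ∃ γ ∈ t, x ∈ ⇑(α γ) '' U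
    · obtain ⟨t, ht⟩ := hcov
      exact isOrderUnit_of_one α (one_tle_of_cover α f t ht)
    · exfalso
      push_neg at hcov
      have hx₀ : ∃ x₀ : X, ∀ γ : Γ, x₀ ∉ ⇑(α γ) '' U := by
        by_contra h'
        push_neg at h'
        obtain ⟨t, ht⟩ := isCompact_univ.elim_finite_subcover (fun γ : Γ => ⇑(α γ) '' U)
          (fun γ => (isClopen_image α γ hUclopen).isOpen)
          (fun x _ => Set.mem_iUnion.2 (h' x))
        obtain ⟨x, hxt⟩ := hcov t
        rcases Set.mem_iUnion₂.1 (ht (Set.mem_univ x)) with ⟨γ, hγt, hγ⟩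
        exact hxt γ hγt hγ
      obtain ⟨x₀, hx₀⟩ := hx₀
      have horb : ∀ γ : Γ, (α γ) x₀ ∉ U := by
        intro γ hγ
        apply hx₀ γ⁻¹
        refine ⟨(α γ) x₀, hγ, ?_⟩
        rw [map_inv]
        exact (α γ).symm_apply_apply x₀
      obtain ⟨m, hm⟩ := hamen
      obtain ⟨μ, hμmem, hμU⟩ := exists_invRadon_null α m hm hUclopen x₀ horb
      have hgt := hpos μ hμmem
      have hzero : intOf μ f = 0 := by
        letI : MeasurableSpace X := borel X
        haveI : BorelSpace X := ⟨rfl⟩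
        have hnull : μ {x : X | ¬ ((f x : ℝ) = 0)} = 0 := by
          refine measure_mono_null ?_ hμU
          intro x hx
          simp only [Set.mem_setOf_eq, Nat.cast_eq_zero] at hx
          exact hx
        have hae : (fun x => ((f x : ℕ) : ℝ)) =ᵐ[μ] (fun _ => (0 : ℝ)) := by
          rw [Filter.EventuallyEq, ae_iff]
          exact hnull
        show (∫ x, ((f x : ℕ) : ℝ) ∂μ) = 0
        rw [integral_congr_ae hae]
        simp
      linarith
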